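/- Let L̂₁ be a symmetric real matrix, invertible, with exactly one positive eigenvalue (counted with multiplicity) whose eigenvector ψ̂ satisfies ⟨ψ̂, û⟩ ≠ 0 for a given nonzero vector û. If ⟨L̂₁^{-1}û, û⟩ > 0, then the constrained operator 𝓛̂ on û^⊥ (defined by 𝓛̂Ψ̂ = L̂₁Ψ̂ - (⟨L̂₁Ψ̂, û⟩/⟨û,û⟩)û) has all eigenvalues negative; if ⟨L̂₁^{-1}û, û⟩ < 0, then 𝓛̂ has a positive eigenvalue on û^⊥. -/

import Mathlib

open Matrix

section Aux

variable {n : ℕ}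

private lemma aux_sum_dot (ψ : Fin n → (Fin n → ℝ)) (a x : Fin n → ℝ) :
    (∑ k, a k • ψ k) ⬝ᵥ x = ∑ k, a k * (ψ k ⬝ᵥ x) := by
  simp only [dotProduct, Finset.sum_apply, Pi.smul_apply, smul_eq_mul, Finset.sum_mul,
    Finset.mul_sum]
  rw [Finset.sum_comm]
  exact Finset.sum_congr rfl fun _ _ => Finset.sum_congr rfl fun _ _ => by ring

private lemma aux_dot_sum (ψ : Fin n → (Fin n → ℝ))
    (horthonormal : ∀ j k, ψ j ⬝ᵥ ψ k = if j = k then 1 else 0)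
    (a : Fin n → ℝ) (j : Fin n) :
    ψ j ⬝ᵥ (∑ k, a k • ψ k) = a j := by
  have h : ψ j ⬝ᵥ (∑ k, a k • ψ k) = ∑ k, a k * (ψ j ⬝ᵥ ψ k) := by
    simp only [dotProduct, Finset.sum_apply, Pi.smul_apply, smul_eq_mul, Finset.mul_sum]
    rw [Finset.sum_comm]
    exact Finset.sum_congr rfl fun _ _ => Finset.sum_congr rfl fun _ _ => by ring
  simp [h, horthonormal]

private lemma aux_expand (ψ : Fin n → (Fin n → ℝ))
    (horthonormal : ∀ j k, ψ j ⬝ᵥ ψ k = if j = k then 1 else 0) (x : Fin n → ℝ) :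
    ∑ k, (ψ k ⬝ᵥ x) • ψ k = x := by
  have hPPt : (Matrix.of ψ) * (Matrix.of ψ)ᵀ = 1 := by
    ext j k
    simpa [Matrix.mul_apply, Matrix.one_apply, dotProduct] using horthonormal j k
  have hPtP : (Matrix.of ψ)ᵀ * (Matrix.of ψ) = 1 := mul_eq_one_comm.mp hPPt
  have h1 : ∑ k, (ψ k ⬝ᵥ x) • ψ k = (Matrix.of ψ)ᵀ *ᵥ ((Matrix.of ψ) *ᵥ x) := by
    funext i
    simp [Matrix.mulVec, dotProduct, Matrix.transpose_apply, Finset.sum_apply, mul_comm]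
  rw [h1, Matrix.mulVec_mulVec, hPtP, Matrix.one_mulVec]

private lemma aux_mulVec (L : Matrix (Fin n) (Fin n) ℝ) (lam : Fin n → ℝ)
    (ψ : Fin n → (Fin n → ℝ)) (heig : ∀ k, L *ᵥ ψ k = lam k • ψ k) (a : Fin n → ℝ) :
    L *ᵥ (∑ k, a k • ψ k) = ∑ k, (lam k * a k) • ψ k := by
  have h0 := map_sum L.mulVecLin (fun k => a k • ψ k) Finset.univ
  simp only [Matrix.mulVecLin_apply] at h0
  rw [h0]
  refine Finset.sum_congr rfl fun k _ => ?_
  rw [Matrix.mulVec_smul, heig k, smul_smul, mul_comm]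

private lemma aux_sym_dot (L : Matrix (Fin n) (Fin n) ℝ) (hL : L.IsSymm) (lam : Fin n → ℝ)
    (ψ : Fin n → (Fin n → ℝ)) (heig : ∀ k, L *ᵥ ψ k = lam k • ψ k) (j : Fin n)
    (y : Fin n → ℝ) : ψ j ⬝ᵥ (L *ᵥ y) = lam j * (ψ j ⬝ᵥ y) := by
  rw [Matrix.dotProduct_mulVec, ← Matrix.mulVec_transpose, hL.eq, heig j,
    smul_dotProduct, smul_eq_mul]

private lemma aux_term_pos {l Λ c : ℝ} (h0 : 0 ≤ Λ) (hlt : Λ < l) :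
    c ^ 2 / l ≤ c ^ 2 / (l - Λ) :=
  div_le_div_of_nonneg_left (sq_nonneg c) (by linarith) (by linarith)

private lemma aux_term_neg {l Λ c : ℝ} (h0 : 0 ≤ Λ) (hl : l < 0) :
    c ^ 2 / l ≤ c ^ 2 / (l - Λ) := by
  have h1 : c ^ 2 / (-(l - Λ)) ≤ c ^ 2 / (-l) :=
    div_le_div_of_nonneg_left (sq_nonneg c) (by linarith) (by linarith)
  rw [div_neg, div_neg] at h1
  linarith

end Aux

/-- Let `L̂₁` be symmetric and invertible, with an orthonormal
eigenbasis `ψ k` (eigenvalues `lam k`) having exactly one positive eigenvalue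
(index `0`), whose eigenvector satisfies `⟨ψ 0, û⟩ ≠ 0`. If `⟨L̂₁⁻¹û, û⟩ > 0`
then every eigenvalue of the constrained operator `𝓛̂` on `û^⊥` is negative;
if `⟨L̂₁⁻¹û, û⟩ < 0` then `𝓛̂` has a positive eigenvalue on `û^⊥`. -/
theorem stmt6 {n : ℕ} (hn : 0 < n) (L₁h : Matrix (Fin n) (Fin n) ℝ)
    (hL : L₁h.IsSymm) (hLinv : IsUnit L₁h.det)
    (uh : Fin n → ℝ) (huh : uh ≠ 0)
    (lam : Fin n → ℝ) (ψ : Fin n → (Fin n → ℝ))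
    (heig : ∀ k, L₁h *ᵥ ψ k = lam k • ψ k)
    (horthonormal : ∀ j k, ψ j ⬝ᵥ ψ k = if j = k then 1 else 0)
    (hpos : 0 < lam ⟨0, hn⟩) (hrest : ∀ k, k ≠ ⟨0, hn⟩ → lam k < 0)
    (hcoef : ψ ⟨0, hn⟩ ⬝ᵥ uh ≠ 0) :
    (0 < (L₁h⁻¹ *ᵥ uh) ⬝ᵥ uh →
      ∀ (Λ : ℝ) (Ψ : Fin n → ℝ), Ψ ≠ 0 → Ψ ⬝ᵥ uh = 0 →
        L₁h *ᵥ Ψ - (((L₁h *ᵥ Ψ) ⬝ᵥ uh) / (uh ⬝ᵥ uh)) • uh = Λ • Ψ → Λ < 0) ∧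
    ((L₁h⁻¹ *ᵥ uh) ⬝ᵥ uh < 0 →
      ∃ (Λ : ℝ) (Ψ : Fin n → ℝ), 0 < Λ ∧ Ψ ≠ 0 ∧ Ψ ⬝ᵥ uh = 0 ∧
        L₁h *ᵥ Ψ - (((L₁h *ᵥ Ψ) ⬝ᵥ uh) / (uh ⬝ᵥ uh)) • uh = Λ • Ψ) := by
  classical
  set i0 : Fin n := ⟨0, hn⟩ with hi0def
  have hlamne : ∀ k, lam k ≠ 0 := by
    intro k
    by_cases hk : k = i0
    · subst hk; exact ne_of_gt hpos
    · exact ne_of_lt (hrest k hk)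
  have huu : uh ⬝ᵥ uh ≠ 0 := fun h => huh (dotProduct_self_eq_zero.mp h)
  -- Q(0) = ∑ c_k² / λ_k
  have hQ0 : (L₁h⁻¹ *ᵥ uh) ⬝ᵥ uh = ∑ k, (ψ k ⬝ᵥ uh) ^ 2 / lam k := by
    have hLv : L₁h *ᵥ (∑ k, ((ψ k ⬝ᵥ uh) / lam k) • ψ k) = uh := by
      rw [aux_mulVec L₁h lam ψ heig]
      have : ∀ k : Fin n, (lam k * ((ψ k ⬝ᵥ uh) / lam k)) • ψ k = (ψ k ⬝ᵥ uh) • ψ k := by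
        intro k
        congr 1
        have := hlamne k
        field_simp
      rw [Finset.sum_congr rfl fun k _ => this k]
      exact aux_expand ψ horthonormal uh
    have hinv : L₁h⁻¹ *ᵥ uh = ∑ k, ((ψ k ⬝ᵥ uh) / lam k) • ψ k := by
      conv_lhs => rw [← hLv]
      rw [Matrix.mulVec_mulVec, Matrix.nonsing_inv_mul _ hLinv, Matrix.one_mulVec]
    rw [hinv, aux_sum_dot]
    exact Finset.sum_congr rfl fun k _ => by ring
  -- termwise comparison lemma
  have hterm : ∀ Λ : ℝ, 0 ≤ Λ → Λ < lam i0 → ∀ k,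
      (ψ k ⬝ᵥ uh) ^ 2 / lam k ≤ (ψ k ⬝ᵥ uh) ^ 2 / (lam k - Λ) := by
    intro Λ h0 hlt k
    by_cases hk : k = i0
    · subst hk; exact aux_term_pos h0 hlt
    · exact aux_term_neg h0 (hrest k hk)
  constructor
  · -- Part 1
    intro hQpos Λ Ψ hΨ hperp heq
    by_contra hΛ
    push_neg at hΛ
    set μ : ℝ := ((L₁h *ᵥ Ψ) ⬝ᵥ uh) / (uh ⬝ᵥ uh) with hμdef
    have hcomp : ∀ j, (lam j - Λ) * (ψ j ⬝ᵥ Ψ) = μ * (ψ j ⬝ᵥ uh) := by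
      intro j
      have h1 := congrArg (fun v => ψ j ⬝ᵥ v) heq
      simp only [dotProduct_sub, dotProduct_smul, smul_eq_mul] at h1
      rw [aux_sym_dot L₁h hL lam ψ heig j Ψ] at h1
      linarith [h1]
    have hsum0 : ∑ k, (ψ k ⬝ᵥ Ψ) * (ψ k ⬝ᵥ uh) = 0 := by
      rw [← aux_sum_dot ψ (fun k => ψ k ⬝ᵥ Ψ) uh, aux_expand ψ horthonormal Ψ]
      exact hperp
    by_cases hμ0 : μ = 0
    · -- μ = 0 case
      have haj : ∀ j, j ≠ i0 → ψ j ⬝ᵥ Ψ = 0 := by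
        intro j hj
        have h2 := hcomp j
        rw [hμ0, zero_mul] at h2
        have hne : lam j - Λ ≠ 0 := by have := hrest j hj; intro h; linarith
        exact (mul_eq_zero.mp h2).resolve_left hne
      have hai0 : ψ i0 ⬝ᵥ Ψ ≠ 0 := by
        intro h
        apply hΨ
        rw [← aux_expand ψ horthonormal Ψ]
        apply Finset.sum_eq_zero
        intro k _
        by_cases hk : k = i0
        · subst hk; rw [h, zero_smul]
        · rw [haj k hk, zero_smul]
      have h3 : ∑ k, (ψ k ⬝ᵥ Ψ) * (ψ k ⬝ᵥ uh) = (ψ i0 ⬝ᵥ Ψ) * (ψ i0 ⬝ᵥ uh) := by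
        apply Finset.sum_eq_single i0
        · intro j _ hj; rw [haj j hj, zero_mul]
        · intro h; exact absurd (Finset.mem_univ i0) h
      rw [h3] at hsum0
      exact mul_ne_zero hai0 hcoef hsum0
    · -- μ ≠ 0 case
      have hden : ∀ j, lam j - Λ ≠ 0 := by
        intro j
        by_cases hj : j = i0
        · subst hj
          intro h
          have h2 := hcomp i0
          rw [h, zero_mul] at h2
          exact hcoef ((mul_eq_zero.mp h2.symm).resolve_left hμ0)
        · have := hrest j hj; intro h; linarith
      have hQzero : ∑ k, (ψ k ⬝ᵥ uh) ^ 2 / (lam k - Λ) = 0 := by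
        have h2 : ∀ k : Fin n, (ψ k ⬝ᵥ Ψ) * (ψ k ⬝ᵥ uh)
            = μ * ((ψ k ⬝ᵥ uh) ^ 2 / (lam k - Λ)) := by
          intro k
          have hd := hden k
          field_simp
          linear_combination (ψ k ⬝ᵥ uh) * hcomp k
        have h3 : μ * ∑ k, (ψ k ⬝ᵥ uh) ^ 2 / (lam k - Λ) = 0 := by
          rw [Finset.mul_sum, ← Finset.sum_congr rfl fun k _ => h2 k]
          exact hsum0
        exact (mul_eq_zero.mp h3).resolve_left hμ0
      have hlamΛ : lam i0 ≠ Λ := fun h => hden i0 (by rw [h, sub_self])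
      rcases lt_or_gt_of_ne hlamΛ with hlt | hgt
      · -- lam i0 < Λ : all terms nonpositive, i0 term negative
        have hsumneg : ∑ k, (ψ k ⬝ᵥ uh) ^ 2 / (lam k - Λ) < 0 := by
          have := Finset.sum_lt_sum (s := Finset.univ)
            (f := fun k => (ψ k ⬝ᵥ uh) ^ 2 / (lam k - Λ)) (g := fun _ => (0 : ℝ))
            (by
              intro k _
              apply div_nonpos_of_nonneg_of_nonpos (sq_nonneg _)
              by_cases hk : k = i0
              · subst hk; linarith
              · have := hrest k hk; linarith)
            ⟨i0, Finset.mem_univ i0, by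
              apply div_neg_of_pos_of_neg
              · exact (sq_nonneg _).lt_of_ne (Ne.symm (pow_ne_zero 2 hcoef))
              · linarith⟩
          simpa using this
        linarith
      · -- Λ < lam i0 : Q(Λ) ≥ Q(0) > 0
        have hle := Finset.sum_le_sum (s := Finset.univ)
          (f := fun k => (ψ k ⬝ᵥ uh) ^ 2 / lam k)
          (g := fun k => (ψ k ⬝ᵥ uh) ^ 2 / (lam k - Λ))
          (fun k _ => hterm Λ hΛ hgt k)
        rw [hQ0] at hQpos
        linarith
  · -- Part 2
    intro hQneg
    rw [hQ0] at hQneg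
    set M : ℝ := -∑ k ∈ Finset.univ.erase i0, (ψ k ⬝ᵥ uh) ^ 2 / lam k with hMdef
    have hM0 : 0 ≤ M := by
      rw [hMdef, neg_nonneg]
      apply Finset.sum_nonpos
      intro k hk
      have hk' : k ≠ i0 := (Finset.mem_erase.mp hk).1
      exact div_nonpos_of_nonneg_of_nonpos (sq_nonneg _) (le_of_lt (hrest k hk'))
    have hc0sq : 0 < (ψ i0 ⬝ᵥ uh) ^ 2 := (sq_nonneg _).lt_of_ne (Ne.symm (pow_ne_zero 2 hcoef))
    set δ : ℝ := min (lam i0 / 2) ((ψ i0 ⬝ᵥ uh) ^ 2 / (M + 1)) with hδdef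
    have hδ0 : 0 < δ := lt_min (by linarith) (div_pos hc0sq (by linarith))
    have hδhalf : δ ≤ lam i0 / 2 := min_le_left _ _
    set b : ℝ := lam i0 - δ with hbdef
    have hbpos : 0 < b := by rw [hbdef]; linarith
    have hblt : b < lam i0 := by rw [hbdef]; linarith
    have hdenb : ∀ x ∈ Set.Icc (0:ℝ) b, ∀ k, lam k - x ≠ 0 := by
      intro x hx k
      obtain ⟨hx0, hxb⟩ := hx
      by_cases hk : k = i0
      · subst hk; intro h; have := sub_eq_zero.mp h; linarith
      · have := hrest k hk; intro h; have := sub_eq_zero.mp h; linarith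
    have hQcont : ContinuousOn (fun t => ∑ k, (ψ k ⬝ᵥ uh) ^ 2 / (lam k - t))
        (Set.Icc (0:ℝ) b) := by
      apply continuousOn_finset_sum
      intro k _
      exact ContinuousOn.div continuousOn_const (continuousOn_const.sub continuousOn_id)
        (fun x hx => hdenb x hx k)
    have hQ0v : ∑ k, (ψ k ⬝ᵥ uh) ^ 2 / (lam k - 0) < 0 := by
      simpa using hQneg
    have hQbv : (1:ℝ) ≤ ∑ k, (ψ k ⬝ᵥ uh) ^ 2 / (lam k - b) := by
      have hsplit : ∑ k, (ψ k ⬝ᵥ uh) ^ 2 / (lam k - b)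
          = (ψ i0 ⬝ᵥ uh) ^ 2 / (lam i0 - b)
            + ∑ k ∈ Finset.univ.erase i0, (ψ k ⬝ᵥ uh) ^ 2 / (lam k - b) :=
        (Finset.add_sum_erase _ _ (Finset.mem_univ i0)).symm
      have h1 : M + 1 ≤ (ψ i0 ⬝ᵥ uh) ^ 2 / (lam i0 - b) := by
        have hd : lam i0 - b = δ := by rw [hbdef]; ring
        rw [hd]
        have hδle : δ ≤ (ψ i0 ⬝ᵥ uh) ^ 2 / (M + 1) := min_le_right _ _
        calc M + 1 = (ψ i0 ⬝ᵥ uh) ^ 2 / ((ψ i0 ⬝ᵥ uh) ^ 2 / (M + 1)) := by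
              rw [div_div_eq_mul_div, mul_comm, mul_div_assoc, div_self (ne_of_gt hc0sq),
                mul_one]
          _ ≤ (ψ i0 ⬝ᵥ uh) ^ 2 / δ :=
              div_le_div_of_nonneg_left (sq_nonneg _) hδ0 hδle
      have h2 : -M ≤ ∑ k ∈ Finset.univ.erase i0, (ψ k ⬝ᵥ uh) ^ 2 / (lam k - b) := by
        rw [hMdef, neg_neg]
        apply Finset.sum_le_sum
        intro k hk
        exact aux_term_neg (le_of_lt hbpos) (hrest k (Finset.mem_erase.mp hk).1)
      rw [hsplit]
      linarith
    obtain ⟨Λ, hΛmem, hΛeq⟩ : ∃ Λ ∈ Set.Icc (0:ℝ) b,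
        ∑ k, (ψ k ⬝ᵥ uh) ^ 2 / (lam k - Λ) = 0 := by
      have hIVT := intermediate_value_Icc (le_of_lt hbpos) hQcont
      have h0mem : (0:ℝ) ∈ Set.Icc (∑ k, (ψ k ⬝ᵥ uh) ^ 2 / (lam k - 0))
          (∑ k, (ψ k ⬝ᵥ uh) ^ 2 / (lam k - b)) := ⟨le_of_lt hQ0v, by linarith⟩
      obtain ⟨Λ, hΛ, hQΛ⟩ := hIVT h0mem
      exact ⟨Λ, hΛ, hQΛ⟩
    have hΛpos : 0 < Λ := by
      rcases lt_or_eq_of_le hΛmem.1 with h | h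
      · exact h
      · exfalso; rw [← h] at hΛeq; linarith
    have hden : ∀ k, lam k - Λ ≠ 0 := hdenb Λ hΛmem
    refine ⟨Λ, ∑ k, ((ψ k ⬝ᵥ uh) / (lam k - Λ)) • ψ k, hΛpos, ?_, ?_, ?_⟩
    · -- Ψ ≠ 0
      intro h
      have hd := aux_dot_sum ψ horthonormal (fun k => (ψ k ⬝ᵥ uh) / (lam k - Λ)) i0
      rw [h, dotProduct_zero] at hd
      exact div_ne_zero hcoef (hden i0) hd.symm
    · -- Ψ ⬝ᵥ uh = 0
      rw [aux_sum_dot, ← hΛeq]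
      exact Finset.sum_congr rfl fun k _ => by ring
    · -- eigen equation
      have hLΨ : L₁h *ᵥ (∑ k, ((ψ k ⬝ᵥ uh) / (lam k - Λ)) • ψ k)
          = ∑ k, (lam k * ((ψ k ⬝ᵥ uh) / (lam k - Λ))) • ψ k :=
        aux_mulVec L₁h lam ψ heig _
      have hLΨu : (L₁h *ᵥ (∑ k, ((ψ k ⬝ᵥ uh) / (lam k - Λ)) • ψ k)) ⬝ᵥ uh = uh ⬝ᵥ uh := by
        rw [hLΨ, aux_sum_dot]
        have huu2 : uh ⬝ᵥ uh = ∑ k, (ψ k ⬝ᵥ uh) ^ 2 := by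
          conv_lhs => rw [← aux_expand ψ horthonormal uh]
          rw [aux_sum_dot]
          refine Finset.sum_congr rfl fun k _ => ?_
          rw [aux_dot_sum ψ horthonormal]
          ring
        rw [huu2]
        have hre : ∀ k : Fin n, lam k * ((ψ k ⬝ᵥ uh) / (lam k - Λ)) * (ψ k ⬝ᵥ uh)
            = (ψ k ⬝ᵥ uh) ^ 2 + Λ * ((ψ k ⬝ᵥ uh) ^ 2 / (lam k - Λ)) := by
          intro k
          have hd := hden k
          field_simp
          ring
        rw [Finset.sum_congr rfl fun k _ => hre k, Finset.sum_add_distrib, ← Finset.mul_sum,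
          hΛeq, mul_zero, add_zero]
      have hsub : (∑ k, (lam k * ((ψ k ⬝ᵥ uh) / (lam k - Λ))) • ψ k)
          - Λ • (∑ k, ((ψ k ⬝ᵥ uh) / (lam k - Λ)) • ψ k) = uh := by
        rw [Finset.smul_sum, ← Finset.sum_sub_distrib]
        have hterm2 : ∀ k : Fin n, (lam k * ((ψ k ⬝ᵥ uh) / (lam k - Λ))) • ψ k
            - Λ • (((ψ k ⬝ᵥ uh) / (lam k - Λ)) • ψ k) = (ψ k ⬝ᵥ uh) • ψ k := by
          intro k
          rw [smul_smul, ← sub_smul]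
          congr 1
          have hd := hden k
          field_simp
        rw [Finset.sum_congr rfl fun k _ => hterm2 k]
        exact aux_expand ψ horthonormal uh
      rw [hLΨu, div_self huu, one_smul, hLΨ]
      exact sub_eq_of_eq_add (sub_eq_iff_eq_add'.mp hsub)
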